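/- arXiv:1109.0210 — 5 statements merged into one kernel-verified Lean document; each statement's English description precedes it below -/
import Mathlib

section
/- For 1 < p < 2 there is a constant c depending only on p such that for all real ε, a, b: F_ε(a,b) ≤ c·(b-a)^2·(max(|a|,|b|))^{p-2}, where F_ε(a,b) = (b^2+ε^2)^{p/2} - (a^2+ε^2)^{p/2} - p·a·(a^2+ε^2)^{(p-2)/2}·(b-a). -/
noncomputable def Fe (p ε a b : ℝ) : ℝ :=
  (b ^ 2 + ε ^ 2) ^ (p / 2) - (a ^ 2 + ε ^ 2) ^ (p / 2)
    - p * a * (a ^ 2 + ε ^ 2) ^ ((p - 2) / 2) * (b - a)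

open Real

set_option maxHeartbeats 1000000

/-- Subadditivity of `x ^ q` for `0 ≤ q ≤ 1`. -/
lemma subadd_rpow {u v q : ℝ} (hu : 0 ≤ u) (hv : 0 ≤ v) (hq0 : 0 ≤ q) (hq1 : q ≤ 1) :
    (u + v) ^ q ≤ u ^ q + v ^ q := by
  have h := NNReal.rpow_add_le_add_rpow u.toNNReal v.toNNReal hq0 hq1
  rw [← Real.toNNReal_add hu hv] at h
  simpa [NNReal.coe_add, NNReal.coe_rpow, Real.coe_toNNReal _ hu, Real.coe_toNNReal _ hv,
    Real.coe_toNNReal _ (add_nonneg hu hv)] using NNReal.coe_le_coe.mpr h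

/-- Concavity/Bernoulli: tangent line bound for `x ^ q`, `0 ≤ q ≤ 1`. -/
lemma tangent_rpow {x y q : ℝ} (hx : 0 < x) (hy : 0 ≤ y) (hq0 : 0 ≤ q) (hq1 : q ≤ 1) :
    y ^ q ≤ x ^ q + q * x ^ (q - 1) * (y - x) := by
  have hs : -1 ≤ y / x - 1 := by
    have : 0 ≤ y / x := div_nonneg hy hx.le
    linarith
  have hb := rpow_one_add_le_one_add_mul_self hs hq0 hq1
  have hyx : (1 : ℝ) + (y / x - 1) = y / x := by ring
  rw [hyx] at hb
  have hxq : (0 : ℝ) ≤ x ^ q := (rpow_pos_of_pos hx q).le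
  have h := mul_le_mul_of_nonneg_left hb hxq
  have hl : x ^ q * (y / x) ^ q = y ^ q := by
    rw [← Real.mul_rpow hx.le (div_nonneg hy hx.le), mul_div_cancel₀ _ hx.ne']
  have hr : x ^ q * (1 + q * (y / x - 1)) = x ^ q + q * x ^ (q - 1) * (y - x) := by
    have hxq1 : x ^ (q - 1) = x ^ q / x := by
      rw [Real.rpow_sub hx, Real.rpow_one]
    rw [hxq1]
    field_simp
  rw [hl, hr] at h
  exact h

lemma sq_rpow_half {t r : ℝ} : (t ^ 2) ^ (r / 2) = |t| ^ r := by
  have h : t ^ 2 = |t| ^ (2 : ℕ) := (sq_abs t).symm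
  rw [h, ← Real.rpow_natCast_mul (abs_nonneg t) 2 (r / 2)]
  congr 1
  push_cast
  ring

theorem Fe_upper_bound (p : ℝ) (hp1 : 1 < p) (hp2 : p < 2) :
    ∃ c : ℝ, 0 < c ∧ ∀ ε a b : ℝ,
      Fe p ε a b ≤ c * (b - a) ^ 2 * (max |a| |b|) ^ (p - 2) := by
  refine ⟨8 * p + 4, by linarith, fun ε a b => ?_⟩
  set M := max |a| |b| with hMdef
  have hMa : |a| ≤ M := le_max_left _ _
  have hMb : |b| ≤ M := le_max_right _ _
  have hM0 : 0 ≤ M := (abs_nonneg a).trans hMa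
  have hq0 : (0:ℝ) ≤ p / 2 := by linarith
  have hq1 : p / 2 ≤ 1 := by linarith
  have hMrnn : 0 ≤ M ^ (p - 2) := Real.rpow_nonneg hM0 _
  by_cases hab : a = b
  · subst hab
    simp [Fe]
  rcases le_or_gt M (2 * |a|) with hcase | hcase
  · -- case |a| ≥ M/2
    have ha : a ≠ 0 := by
      intro h; subst h
      simp at hcase
      have : |b| ≤ 0 := hMb.trans hcase
      have : b = 0 := abs_eq_zero.mp (le_antisymm this (abs_nonneg b))
      exact hab this.symm
    have ha2 : 0 < a ^ 2 := by positivity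
    have hx : 0 < a ^ 2 + ε ^ 2 := by positivity
    have hMpos : 0 < M := lt_of_lt_of_le (abs_pos.mpr ha) hMa
    have hy : (0:ℝ) ≤ b ^ 2 + ε ^ 2 := by positivity
    have htan := tangent_rpow hx hy hq0 hq1
    have hexp : p / 2 - 1 = (p - 2) / 2 := by ring
    rw [hexp] at htan
    set X := (a ^ 2 + ε ^ 2) ^ ((p - 2) / 2) with hX
    have hX0 : 0 ≤ X := Real.rpow_nonneg hx.le _
    have hFe : Fe p ε a b ≤ p / 2 * X * (b - a) ^ 2 := by
      have : Fe p ε a b ≤ p / 2 * X * ((b ^ 2 + ε ^ 2) - (a ^ 2 + ε ^ 2))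
          - p * a * X * (b - a) := by
        unfold Fe; rw [← hX]; nlinarith [htan]
      calc Fe p ε a b ≤ p / 2 * X * ((b ^ 2 + ε ^ 2) - (a ^ 2 + ε ^ 2))
            - p * a * X * (b - a) := this
        _ = p / 2 * X * (b - a) ^ 2 := by ring
    -- X ≤ 2 * M ^ (p-2)
    have h1 : X ≤ (a ^ 2) ^ ((p - 2) / 2) :=
      Real.rpow_le_rpow_of_nonpos ha2 (by nlinarith [sq_nonneg ε]) (by linarith)
    have h2 : (a ^ 2 : ℝ) ^ ((p - 2) / 2) = |a| ^ (p - 2) := sq_rpow_half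
    have h3 : |a| ^ (p - 2) ≤ (M / 2) ^ (p - 2) :=
      Real.rpow_le_rpow_of_nonpos (by linarith) (by linarith) (by linarith)
    have h4 : (M / 2 : ℝ) ^ (p - 2) ≤ 2 * M ^ (p - 2) := by
      rw [Real.div_rpow hM0 (by norm_num)]
      rw [div_le_iff₀ (by positivity)]
      have h2p : (1 : ℝ) ≤ (2:ℝ) ^ (p - 2) * 2 := by
        have h5 : (2:ℝ) ^ (p - 2) * 2 = (2:ℝ) ^ (p - 1) := by
          rw [show p - 1 = (p - 2) + 1 by ring, Real.rpow_add_one (by norm_num : (2:ℝ) ≠ 0)]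
        rw [h5]
        calc (1:ℝ) = (2:ℝ) ^ (0:ℝ) := by norm_num
          _ ≤ (2:ℝ) ^ (p - 1) := Real.rpow_le_rpow_of_exponent_le (by norm_num) (by linarith)
      calc M ^ (p - 2) = M ^ (p - 2) * 1 := by ring
        _ ≤ M ^ (p - 2) * ((2:ℝ) ^ (p - 2) * 2) :=
            mul_le_mul_of_nonneg_left h2p hMrnn
        _ = 2 * M ^ (p - 2) * 2 ^ (p - 2) := by ring
    have hXM : X ≤ 2 * M ^ (p - 2) := by
      calc X ≤ (a ^ 2) ^ ((p - 2) / 2) := h1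
        _ = |a| ^ (p - 2) := h2
        _ ≤ (M / 2) ^ (p - 2) := h3
        _ ≤ 2 * M ^ (p - 2) := h4
    calc Fe p ε a b ≤ p / 2 * X * (b - a) ^ 2 := hFe
      _ ≤ p / 2 * (2 * M ^ (p - 2)) * (b - a) ^ 2 := by
          have := mul_le_mul_of_nonneg_left hXM (by linarith : (0:ℝ) ≤ p / 2)
          nlinarith [sq_nonneg (b - a)]
      _ = p * (b - a) ^ 2 * M ^ (p - 2) := by ring
      _ ≤ (8 * p + 4) * (b - a) ^ 2 * M ^ (p - 2) := by
          have : (0:ℝ) ≤ (b - a) ^ 2 * M ^ (p - 2) := by positivity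
          nlinarith
  · -- case 2|a| < M, so M = |b|
    have hMb' : M = |b| := by
      rcases le_or_gt |a| |b| with h | h
      · rw [hMdef]; exact max_eq_right h
      · exfalso
        have hM' : M = |a| := by rw [hMdef]; exact max_eq_left h.le
        rw [hM'] at hcase; linarith [abs_nonneg a]
    have hb : 0 < |b| := by
      rw [← hMb']; linarith [abs_nonneg a]
    have hMpos : 0 < M := hMb' ▸ hb
    have haM : 2 * |a| < M := hcase
    have ha2b2 : a ^ 2 ≤ b ^ 2 := by
      have h1 : |a| ≤ |b| := by rw [← hMb']; exact hMa
      calc a ^ 2 = |a| ^ 2 := (sq_abs a).symm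
        _ ≤ |b| ^ 2 := pow_le_pow_left₀ (abs_nonneg a) h1 2
        _ = b ^ 2 := sq_abs b
    -- T1 bound
    have hT1 : (b ^ 2 + ε ^ 2) ^ (p / 2) - (a ^ 2 + ε ^ 2) ^ (p / 2) ≤ M ^ p := by
      have hsub : (b ^ 2 + ε ^ 2) ^ (p / 2)
          ≤ (b ^ 2 - a ^ 2) ^ (p / 2) + (a ^ 2 + ε ^ 2) ^ (p / 2) := by
        have h := subadd_rpow (u := b ^ 2 - a ^ 2) (v := a ^ 2 + ε ^ 2)
          (by linarith) (by positivity) hq0 hq1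
        have he : b ^ 2 - a ^ 2 + (a ^ 2 + ε ^ 2) = b ^ 2 + ε ^ 2 := by ring
        rwa [he] at h
      have h2 : (b ^ 2 - a ^ 2) ^ (p / 2) ≤ (b ^ 2) ^ (p / 2) :=
        Real.rpow_le_rpow (by linarith) (by nlinarith) hq0
      have h3 : (b ^ 2 : ℝ) ^ (p / 2) = |b| ^ p := sq_rpow_half
      have h4 : |b| ^ p = M ^ p := by rw [hMb']
      have h5 : (b ^ 2 - a ^ 2) ^ (p / 2) ≤ M ^ p := by
        rw [← h4, ← h3]; exact h2
      linarith
    -- T2 bound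
    have hT2 : -(p * a * (a ^ 2 + ε ^ 2) ^ ((p - 2) / 2) * (b - a)) ≤ 2 * p * M ^ p := by
      by_cases ha : a = 0
      · subst ha
        simp
        positivity
      · have ha2 : 0 < a ^ 2 := by positivity
        have hX1 : (a ^ 2 + ε ^ 2) ^ ((p - 2) / 2) ≤ (a ^ 2) ^ ((p - 2) / 2) :=
          Real.rpow_le_rpow_of_nonpos ha2 (by nlinarith [sq_nonneg ε]) (by linarith)
        have hX2 : (a ^ 2 : ℝ) ^ ((p - 2) / 2) = |a| ^ (p - 2) := sq_rpow_half
        have habs : |a| * (a ^ 2 + ε ^ 2) ^ ((p - 2) / 2) ≤ |a| ^ (p - 1) := by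
          have h5 : |a| * |a| ^ (p - 2) = |a| ^ (p - 1) := by
            rw [show p - 1 = (p - 2) + 1 by ring,
              Real.rpow_add_one (abs_ne_zero.mpr ha), mul_comm]
          calc |a| * (a ^ 2 + ε ^ 2) ^ ((p - 2) / 2)
              ≤ |a| * |a| ^ (p - 2) := by
                rw [← hX2]
                exact mul_le_mul_of_nonneg_left hX1 (abs_nonneg a)
            _ = |a| ^ (p - 1) := h5
        have haM' : |a| ^ (p - 1) ≤ M ^ (p - 1) :=
          Real.rpow_le_rpow (abs_nonneg a) hMa (by linarith)
        have hba : |b - a| ≤ 2 * M := by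
          calc |b - a| ≤ |b| + |a| := abs_sub _ _
            _ ≤ M + M := add_le_add hMb hMa
            _ = 2 * M := by ring
        have hMM : M ^ (p - 1) * M = M ^ p := by
          rw [← Real.rpow_add_one hMpos.ne' (p - 1)]
          congr 1
          ring
        have hXnn : (0:ℝ) ≤ (a ^ 2 + ε ^ 2) ^ ((p - 2) / 2) := Real.rpow_nonneg (by positivity) _
        calc -(p * a * (a ^ 2 + ε ^ 2) ^ ((p - 2) / 2) * (b - a))
            ≤ p * (|a| * (a ^ 2 + ε ^ 2) ^ ((p - 2) / 2)) * |b - a| := by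
              have h1 : -(p * a * (a ^ 2 + ε ^ 2) ^ ((p - 2) / 2) * (b - a))
                  ≤ |p * a * (a ^ 2 + ε ^ 2) ^ ((p - 2) / 2) * (b - a)| :=
                neg_le_abs _
              have h2 : |p * a * (a ^ 2 + ε ^ 2) ^ ((p - 2) / 2) * (b - a)|
                  = p * (|a| * (a ^ 2 + ε ^ 2) ^ ((p - 2) / 2)) * |b - a| := by
                rw [abs_mul, abs_mul, abs_mul]
                rw [abs_of_pos (by linarith : (0:ℝ) < p), abs_of_nonneg hXnn]
                ring
              linarith [h2 ▸ h1]
          _ ≤ p * |a| ^ (p - 1) * |b - a| := by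
              apply mul_le_mul_of_nonneg_right _ (abs_nonneg _)
              exact mul_le_mul_of_nonneg_left habs (by linarith)
          _ ≤ p * M ^ (p - 1) * (2 * M) := by
              apply mul_le_mul
              · exact mul_le_mul_of_nonneg_left haM' (by linarith)
              · exact hba
              · exact abs_nonneg _
              · positivity
          _ = 2 * p * (M ^ (p - 1) * M) := by ring
          _ = 2 * p * M ^ p := by rw [hMM]
    have hFeT : Fe p ε a b ≤ (1 + 2 * p) * M ^ p := by
      unfold Fe
      have := hT1
      have := hT2
      nlinarith
    -- RHS lower bound
    have hba2 : M / 2 ≤ |b - a| := by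
      have h1 : |b| - |a| ≤ |b - a| := abs_sub_abs_le_abs_sub b a
      rw [← hMb'] at h1
      linarith
    have hsq : M ^ 2 / 4 ≤ (b - a) ^ 2 := by
      have h1 : (M / 2) ^ 2 ≤ |b - a| ^ 2 := by
        nlinarith [abs_nonneg (b - a)]
      have h2 : |b - a| ^ 2 = (b - a) ^ 2 := sq_abs _
      nlinarith
    have hMp : M ^ 2 * M ^ (p - 2) = M ^ p := by
      rw [show (M:ℝ) ^ (2:ℕ) = M ^ (2:ℝ) from (Real.rpow_natCast M 2).symm]
      rw [← Real.rpow_add hMpos]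
      norm_num
    calc Fe p ε a b ≤ (1 + 2 * p) * M ^ p := hFeT
      _ = (1 + 2 * p) * (M ^ 2 * M ^ (p - 2)) := by rw [hMp]
      _ = (8 * p + 4) * (M ^ 2 / 4) * M ^ (p - 2) := by ring
      _ ≤ (8 * p + 4) * (b - a) ^ 2 * M ^ (p - 2) := by
          have h1 : (0:ℝ) ≤ (8 * p + 4) * M ^ (p - 2) := by positivity
          nlinarith
end

section
/- For ε ≠ 0 and p > 1, the function a ↦ F_ε(a,b) is decreasing on (-∞, b] and increasing on [b, ∞). -/
lemma Fe_hasDerivAt (p ε b : ℝ) (hε : ε ≠ 0) (a : ℝ) :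
    HasDerivAt (fun a => Fe p ε a b)
      (-(p * (a ^ 2 + ε ^ 2) ^ ((p - 4) / 2) * (ε ^ 2 + (p - 1) * a ^ 2)) * (b - a)) a := by
  have hx : 0 < a ^ 2 + ε ^ 2 := by positivity
  have h1 : HasDerivAt (fun a : ℝ => a ^ 2 + ε ^ 2) (2 * a) a := by
    simpa using (hasDerivAt_pow 2 a).add_const (ε ^ 2)
  have hg := h1.rpow_const (p := p / 2) (Or.inl hx.ne')
  have hg2 := h1.rpow_const (p := (p - 2) / 2) (Or.inl hx.ne')
  have hc : HasDerivAt (fun a : ℝ => p * a) p a := by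
    simpa using (hasDerivAt_id a).const_mul p
  have hu := hc.mul hg2
  have hv : HasDerivAt (fun a : ℝ => b - a) (-1) a := by
    simpa using (hasDerivAt_id a).const_sub b
  have hw := hu.mul hv
  have hfull := ((hasDerivAt_const a ((b ^ 2 + ε ^ 2) ^ (p / 2))).sub hg).sub hw
  have e1 : p / 2 - 1 = (p - 2) / 2 := by ring
  have e2 : (p - 2) / 2 - 1 = (p - 4) / 2 := by ring
  have e3 : (a ^ 2 + ε ^ 2) ^ ((p - 2) / 2)
      = (a ^ 2 + ε ^ 2) ^ ((p - 4) / 2) * (a ^ 2 + ε ^ 2) := by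
    rw [← Real.rpow_add_one hx.ne']
    congr 1
    ring
  rw [e1, e2, e3] at hfull
  convert hfull using 1
  · rfl
  · rfl
  · rfl
  · simp only [Pi.mul_apply]
    rw [e3]
    ring

theorem Fe_monotone_in_a (p ε b : ℝ) (hp : 1 < p) (hε : ε ≠ 0) :
    StrictAntiOn (fun a => Fe p ε a b) (Set.Iic b) ∧
    StrictMonoOn (fun a => Fe p ε a b) (Set.Ici b) := by
  have hcont : ∀ s : Set ℝ, ContinuousOn (fun a => Fe p ε a b) s := fun s x _ =>
    (Fe_hasDerivAt p ε b hε x).continuousAt.continuousWithinAt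
  have hK : ∀ x : ℝ, 0 < p * (x ^ 2 + ε ^ 2) ^ ((p - 4) / 2) * (ε ^ 2 + (p - 1) * x ^ 2) := by
    intro x
    have hx : 0 < x ^ 2 + ε ^ 2 := by positivity
    have h1 := Real.rpow_pos_of_pos hx ((p - 4) / 2)
    have h2 : 0 < ε ^ 2 := by positivity
    have h3 : 0 < ε ^ 2 + (p - 1) * x ^ 2 := by nlinarith [sq_nonneg x]
    have hp0 : (0:ℝ) < p := by linarith
    exact mul_pos (mul_pos hp0 h1) h3
  constructor
  · apply strictAntiOn_of_deriv_neg (convex_Iic b) (hcont _)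
    intro x hx
    rw [interior_Iic] at hx
    rw [(Fe_hasDerivAt p ε b hε x).deriv]
    have := mul_pos (hK x) (show 0 < b - x by simpa using sub_pos.2 (Set.mem_Iio.mp hx))
    nlinarith
  · apply strictMonoOn_of_deriv_pos (convex_Ici b) (hcont _)
    intro x hx
    rw [interior_Ici] at hx
    rw [(Fe_hasDerivAt p ε b hε x).deriv]
    have := mul_pos (hK x) (show 0 < x - b by simpa using sub_pos.2 (Set.mem_Ioi.mp hx))
    nlinarith
end

section
/- For every p > 1 and all real a₁, a₂, b₁, b₂, ε: F_ε(min(a₁,a₂), min(b₁,b₂)) ≤ max(F_ε(a₁,b₁), F_ε(a₂,b₂)). -/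
noncomputable def G (p ε x : ℝ) : ℝ := p * x * (x ^ 2 + ε ^ 2) ^ ((p - 2) / 2)

lemma sq_rpow_half_s10 (p x : ℝ) : (x ^ 2) ^ (p / 2) = |x| ^ p := by
  rw [← sq_abs, ← Real.rpow_natCast |x| 2, ← Real.rpow_mul (abs_nonneg x)]
  congr 1
  push_cast
  ring

lemma hasDerivAt_g (p : ℝ) (hp : 1 < p) (ε : ℝ) (x : ℝ) :
    HasDerivAt (fun x : ℝ => (x ^ 2 + ε ^ 2) ^ (p / 2)) (G p ε x) x := by
  rcases eq_or_ne (x ^ 2 + ε ^ 2) 0 with h0 | h0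
  · have hx : x = 0 := by nlinarith [sq_nonneg x, sq_nonneg ε]
    have he : ε = 0 := by nlinarith [sq_nonneg x, sq_nonneg ε]
    subst hx he
    have hG : G p 0 0 = 0 := by simp [G]
    rw [hG, hasDerivAt_iff_isLittleO]
    simp only [zero_pow, ne_eq, OfNat.ofNat_ne_zero, not_false_iff, add_zero, zero_add,
      smul_zero, sub_zero, Real.zero_rpow (by positivity : p / 2 ≠ 0)]
    have hz : ((0:ℝ) ^ 2) ^ (p / 2) = 0 := by
      rw [sq_rpow_half_s10]; simp [Real.zero_rpow (by linarith : p ≠ 0)]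
    rw [Asymptotics.isLittleO_iff]
    intro c hc
    have hcont : Continuous fun x : ℝ => |x| ^ (p - 1) :=
      continuous_abs.rpow_const (fun x => Or.inr (by linarith))
    have h0' : Filter.Tendsto (fun x : ℝ => |x| ^ (p - 1)) (nhds 0) (nhds 0) := by
      have := hcont.tendsto 0
      simpa [Real.zero_rpow (by linarith : p - 1 ≠ 0)] using this
    filter_upwards [h0'.eventually_le_const hc] with x hx
    rw [hz] at *
    have : (x ^ 2) ^ (p / 2) = |x| ^ (p - 1) * |x| := by
      calc (x ^ 2) ^ (p / 2) = |x| ^ p := sq_rpow_half_s10 p x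
        _ = |x| ^ ((p - 1) + 1) := by ring_nf
        _ = |x| ^ (p - 1) * |x| := by
            rw [Real.rpow_add' (abs_nonneg x) (by linarith), Real.rpow_one]
    rw [Real.norm_eq_abs, this, abs_of_nonneg (by positivity)]
    rw [Real.norm_eq_abs]
    exact mul_le_mul_of_nonneg_right hx (abs_nonneg x)
  · have hpos : 0 < x ^ 2 + ε ^ 2 := lt_of_le_of_ne (by positivity) (Ne.symm h0)
    have h1 : HasDerivAt (fun x : ℝ => x ^ 2 + ε ^ 2) (2 * x) x := by
      simpa using (hasDerivAt_pow 2 x).add_const (ε ^ 2)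
    have h2 := h1.rpow_const (p := p / 2) (Or.inl h0)
    have hexp : p / 2 - 1 = (p - 2) / 2 := by ring
    rw [hexp] at h2
    convert h2 using 1
    rw [G]; ring

lemma G_nonneg (p ε : ℝ) (hp : 1 < p) {x : ℝ} (hx : 0 ≤ x) : 0 ≤ G p ε x := by
  have hp0 : 0 ≤ p := by linarith
  unfold G
  positivity

lemma G_eq_of_nonneg (p : ℝ) (hp : 1 < p) {x : ℝ} (hx : 0 ≤ x) :
    G p 0 x = p * x ^ (p - 1) := by
  rcases eq_or_lt_of_le hx with rfl | hx'
  · simp [G, Real.zero_rpow (by linarith : p - 1 ≠ 0)]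
  · unfold G
    rw [show (0:ℝ) ^ 2 = 0 by norm_num, add_zero, sq_rpow_half_s10, abs_of_pos hx']
    rw [show p * x * x ^ (p - 2) = p * (x ^ (1:ℝ) * x ^ (p - 2)) by
      rw [Real.rpow_one]; ring]
    rw [← Real.rpow_add hx', show (1:ℝ) + (p - 2) = p - 1 by ring]

lemma G_odd (p ε x : ℝ) : G p ε (-x) = -G p ε x := by
  unfold G
  rw [neg_pow]
  ring_nf

lemma G_mono (p : ℝ) (hp : 1 < p) (ε : ℝ) : Monotone (G p ε) := by
  rcases eq_or_ne ε 0 with rfl | hε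
  · intro x y hxy
    rcases le_total 0 x with hx | hx
    · rw [G_eq_of_nonneg p hp hx, G_eq_of_nonneg p hp (hx.trans hxy)]
      exact mul_le_mul_of_nonneg_left
        (Real.rpow_le_rpow hx hxy (by linarith)) (by linarith)
    · rcases le_total 0 y with hy | hy
      · calc G p 0 x ≤ 0 := by
              rw [← neg_neg x, G_odd, neg_nonpos]
              exact G_nonneg p 0 hp (by linarith)
          _ ≤ G p 0 y := G_nonneg p 0 hp hy
      · have key : G p 0 (-y) ≤ G p 0 (-x) := by
          rw [G_eq_of_nonneg p hp (by linarith : (0:ℝ) ≤ -y),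
            G_eq_of_nonneg p hp (by linarith : (0:ℝ) ≤ -x)]
          exact mul_le_mul_of_nonneg_left
            (Real.rpow_le_rpow (by linarith) (by linarith) (by linarith)) (by linarith)
        linarith [G_odd p 0 x, G_odd p 0 y]
  · have hpos : ∀ x : ℝ, 0 < x ^ 2 + ε ^ 2 := fun x => by positivity
    have hder : ∀ x : ℝ, HasDerivAt (G p ε)
        (p * ((x ^ 2 + ε ^ 2) ^ ((p - 4) / 2) * ((p - 1) * x ^ 2 + ε ^ 2))) x := by
      intro x
      have h1 : HasDerivAt (fun x : ℝ => x ^ 2 + ε ^ 2) (2 * x) x := by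
        simpa using (hasDerivAt_pow 2 x).add_const (ε ^ 2)
      have h2 := h1.rpow_const (p := (p - 2) / 2) (Or.inl (hpos x).ne')
      have h3 := ((hasDerivAt_id x).mul h2).const_mul p
      have key : p * (1 * (x ^ 2 + ε ^ 2) ^ ((p - 2) / 2) +
          x * (2 * x * ((p - 2) / 2) * (x ^ 2 + ε ^ 2) ^ ((p - 2) / 2 - 1))) =
          p * ((x ^ 2 + ε ^ 2) ^ ((p - 4) / 2) * ((p - 1) * x ^ 2 + ε ^ 2)) := by
        have e1 : (p - 2) / 2 - 1 = (p - 4) / 2 := by ring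
        have e2 : (x ^ 2 + ε ^ 2) ^ ((p - 2) / 2) =
            (x ^ 2 + ε ^ 2) ^ ((p - 4) / 2) * (x ^ 2 + ε ^ 2) := by
          rw [show (p - 2) / 2 = (p - 4) / 2 + 1 by ring,
            Real.rpow_add (hpos x), Real.rpow_one]
        rw [e1, e2]; ring
      simp only [id_eq] at h3
      rw [key] at h3
      have hfun : G p ε = fun y : ℝ => p * (y * (y ^ 2 + ε ^ 2) ^ ((p - 2) / 2)) := by
        funext y; unfold G; ring
      rw [hfun]
      exact h3
    apply monotone_of_deriv_nonneg (fun x => (hder x).differentiableAt)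
    intro x
    rw [(hder x).deriv]
    have h1 : (0:ℝ) ≤ (p - 1) * x ^ 2 + ε ^ 2 := by nlinarith [sq_nonneg x, sq_nonneg ε]
    have h2 : (0:ℝ) ≤ (x ^ 2 + ε ^ 2) ^ ((p - 4) / 2) := Real.rpow_nonneg (hpos x).le _
    exact mul_nonneg (by linarith) (mul_nonneg h2 h1)

lemma tangent (p : ℝ) (hp : 1 < p) (ε x y : ℝ) :
    G p ε x * (y - x) ≤ (y ^ 2 + ε ^ 2) ^ (p / 2) - (x ^ 2 + ε ^ 2) ^ (p / 2) := by
  set g : ℝ → ℝ := fun x => (x ^ 2 + ε ^ 2) ^ (p / 2) with hg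
  have hcont : Continuous g :=
    ((continuous_pow 2).add continuous_const).rpow_const (fun x => Or.inr (by positivity))
  rcases lt_trichotomy x y with hxy | rfl | hxy
  · obtain ⟨c, hc, hceq⟩ := exists_hasDerivAt_eq_slope g (G p ε) hxy
      hcont.continuousOn (fun z _ => hasDerivAt_g p hp ε z)
    have h1 : G p ε c * (y - x) = g y - g x := by
      rw [hceq, div_mul_eq_mul_div, mul_div_assoc, div_self (by linarith), mul_one]
    have h2 : G p ε x ≤ G p ε c := G_mono p hp ε hc.1.le
    calc G p ε x * (y - x) ≤ G p ε c * (y - x) :=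
          mul_le_mul_of_nonneg_right h2 (by linarith)
      _ = g y - g x := h1
  · simp
  · obtain ⟨c, hc, hceq⟩ := exists_hasDerivAt_eq_slope g (G p ε) hxy
      hcont.continuousOn (fun z _ => hasDerivAt_g p hp ε z)
    have h1 : G p ε c * (x - y) = g x - g y := by
      rw [hceq, div_mul_eq_mul_div, mul_div_assoc, div_self (by linarith), mul_one]
    have h2 : G p ε c ≤ G p ε x := G_mono p hp ε hc.2.le
    have h3 : G p ε x * (y - x) ≤ G p ε c * (y - x) :=
      mul_le_mul_of_nonpos_right h2 (by linarith)
    have h4 : G p ε c * (y - x) = -(G p ε c * (x - y)) := by ring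
    linarith

lemma Fe_eq (p ε a b : ℝ) : Fe p ε a b =
    (b ^ 2 + ε ^ 2) ^ (p / 2) - (a ^ 2 + ε ^ 2) ^ (p / 2) - G p ε a * (b - a) := rfl

lemma Fe_mono_b (p : ℝ) (hp : 1 < p) (ε a b₂ b₁ : ℝ) (hab : a ≤ b₂) (hbb : b₂ ≤ b₁) :
    Fe p ε a b₂ ≤ Fe p ε a b₁ := by
  have h2 := tangent p hp ε b₂ b₁
  have h1 : G p ε a * (b₁ - b₂) ≤ G p ε b₂ * (b₁ - b₂) :=
    mul_le_mul_of_nonneg_right (G_mono p hp ε hab) (by linarith)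
  rw [Fe_eq, Fe_eq]
  have hd : G p ε a * (b₁ - a) = G p ε a * (b₁ - b₂) + G p ε a * (b₂ - a) := by ring
  linarith

lemma Fe_mono_a (p : ℝ) (hp : 1 < p) (ε b a₁ a₂ : ℝ) (hba : b ≤ a₁) (ha : a₁ ≤ a₂) :
    Fe p ε a₁ b ≤ Fe p ε a₂ b := by
  have t := tangent p hp ε a₂ a₁
  have h1 : G p ε a₂ * (b - a₁) ≤ G p ε a₁ * (b - a₁) :=
    mul_le_mul_of_nonpos_right (G_mono p hp ε ha) (by linarith)
  have hd : G p ε a₂ * (b - a₂) = G p ε a₂ * (b - a₁) + G p ε a₂ * (a₁ - a₂) := by ring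
  rw [Fe_eq, Fe_eq]
  linarith

lemma Fe_min_aux (p : ℝ) (hp : 1 < p) (ε a₁ a₂ b₁ b₂ : ℝ) (h : a₁ ≤ a₂) :
    Fe p ε (min a₁ a₂) (min b₁ b₂) ≤ max (Fe p ε a₁ b₁) (Fe p ε a₂ b₂) := by
  rw [min_eq_left h]
  rcases le_total b₁ b₂ with hb | hb
  · rw [min_eq_left hb]; exact le_max_left _ _
  · rw [min_eq_right hb]
    rcases le_total a₁ b₂ with hab | hab
    · exact le_trans (Fe_mono_b p hp ε a₁ b₂ b₁ hab hb) (le_max_left _ _)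
    · exact le_trans (Fe_mono_a p hp ε b₂ a₁ a₂ hab h) (le_max_right _ _)

theorem Fe_min (p : ℝ) (hp : 1 < p) (ε a₁ a₂ b₁ b₂ : ℝ) :
    Fe p ε (min a₁ a₂) (min b₁ b₂) ≤ max (Fe p ε a₁ b₁) (Fe p ε a₂ b₂) := by
  rcases le_total a₁ a₂ with h | h
  · exact Fe_min_aux p hp ε a₁ a₂ b₁ b₂ h
  · rw [min_comm a₁ a₂, min_comm b₁ b₂, max_comm]
    exact Fe_min_aux p hp ε a₂ a₁ b₂ b₁ h
end

section
/- For every p > 1 and all real a₁, a₂, b₁, b₂, ε: F_ε(max(a₁,a₂), max(b₁,b₂)) ≤ max(F_ε(a₁,b₁), F_ε(a₂,b₂)). -/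
open Real

noncomputable def Fg (p ε x : ℝ) : ℝ := p * x * (x ^ 2 + ε ^ 2) ^ ((p - 2) / 2)

lemma Fe_def (p ε a b : ℝ) :
    Fe p ε a b = (b ^ 2 + ε ^ 2) ^ (p / 2) - (a ^ 2 + ε ^ 2) ^ (p / 2)
      - Fg p ε a * (b - a) := rfl

lemma hasDerivAt_Fh (p ε : ℝ) (hp : 1 < p) (x : ℝ) :
    HasDerivAt (fun y => (y ^ 2 + ε ^ 2) ^ (p / 2)) (Fg p ε x) x := by
  rcases eq_or_ne (x ^ 2 + ε ^ 2) 0 with h0 | h0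
  · have hx : x = 0 := by nlinarith [sq_nonneg x, sq_nonneg ε]
    have he : ε = 0 := by nlinarith [sq_nonneg x, sq_nonneg ε]
    subst hx he
    have hFg : Fg p 0 0 = 0 := by simp [Fg]
    rw [hFg]
    have hfun : ∀ y : ℝ, (y ^ 2 + 0 ^ 2) ^ (p / 2) = |y| ^ p := by
      intro y
      rw [show y ^ 2 + 0 ^ 2 = |y| ^ 2 by rw [sq_abs]; ring,
        ← Real.rpow_natCast |y| 2, ← Real.rpow_mul (abs_nonneg y)]
      norm_num
      ring_nf
    simp only [hfun]
    rw [hasDerivAt_iff_tendsto_slope]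
    have hb : ∀ y : ℝ, ‖slope (fun y : ℝ => |y| ^ p) 0 y‖ ≤ |y| ^ (p - 1) := by
      intro y
      rcases eq_or_ne y 0 with rfl | hy
      · simp [slope, Real.zero_rpow (by linarith : p - 1 ≠ 0)]
      · have hy' : (0:ℝ) < |y| := abs_pos.2 hy
        simp only [slope_def_field, div_eq_mul_inv]
        rw [show |(0:ℝ)| ^ p = 0 by simp [Real.zero_rpow (by positivity : p ≠ 0)]]
        rw [Real.rpow_sub hy', Real.rpow_one]
        rw [norm_eq_abs, abs_mul, abs_inv, sub_zero, sub_zero,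
          abs_of_nonneg (Real.rpow_nonneg (abs_nonneg y) p), div_eq_mul_inv]
    refine squeeze_zero_norm hb ?_
    have hc : ContinuousAt (fun y : ℝ => |y| ^ (p - 1)) 0 :=
      (Real.continuousAt_rpow_const _ _ (Or.inr (by linarith))).comp
        continuous_abs.continuousAt
    have h0 : |(0:ℝ)| ^ (p - 1) = 0 := by
      simp [Real.zero_rpow (by linarith : p - 1 ≠ 0)]
    have := hc.tendsto
    rw [h0] at this
    exact this.mono_left nhdsWithin_le_nhds
  · have h1 : HasDerivAt (fun y : ℝ => y ^ 2 + ε ^ 2) (2 * x) x := by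
      simpa using ((hasDerivAt_pow 2 x).add_const (ε ^ 2))
    have h2 := (Real.hasDerivAt_rpow_const (p := p / 2) (Or.inl h0)).comp x h1
    refine h2.congr_deriv ?_
    unfold Fg
    rw [show p / 2 - 1 = (p - 2) / 2 by ring]
    ring

lemma hasDerivAt_Fg (p ε : ℝ) (hp : 1 < p) (x : ℝ) (hx : x ^ 2 + ε ^ 2 ≠ 0) :
    HasDerivAt (Fg p ε)
      (p * (((p - 1) * x ^ 2 + ε ^ 2) * (x ^ 2 + ε ^ 2) ^ ((p - 4) / 2))) x := by
  have hpos : 0 < x ^ 2 + ε ^ 2 := lt_of_le_of_ne (by positivity) (Ne.symm hx)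
  have h1 : HasDerivAt (fun y : ℝ => y ^ 2 + ε ^ 2) (2 * x) x := by
    simpa using ((hasDerivAt_pow 2 x).add_const (ε ^ 2))
  have h2 := (Real.hasDerivAt_rpow_const (p := (p - 2) / 2) (Or.inl hx)).comp x h1
  have h3 : HasDerivAt (fun y : ℝ => p * y * (y ^ 2 + ε ^ 2) ^ ((p - 2) / 2))
      (p * 1 * (x ^ 2 + ε ^ 2) ^ ((p - 2) / 2)
        + p * x * ((p - 2) / 2 * (x ^ 2 + ε ^ 2) ^ ((p - 2) / 2 - 1) * (2 * x))) x :=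
    ((hasDerivAt_id x).const_mul p).mul h2
  have key : (x ^ 2 + ε ^ 2) ^ ((p - 2) / 2)
      = (x ^ 2 + ε ^ 2) * (x ^ 2 + ε ^ 2) ^ ((p - 4) / 2) := by
    rw [show (p - 2) / 2 = 1 + (p - 4) / 2 by ring, Real.rpow_add hpos, Real.rpow_one]
  unfold Fg
  convert h3 using 1
  rw [show (p - 2) / 2 - 1 = (p - 4) / 2 by ring, key]
  ring

lemma Fg_mono (p ε : ℝ) (hp : 1 < p) : Monotone (Fg p ε) := by
  have hIoi : MonotoneOn (Fg p ε) (Set.Ioi 0) := by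
    have hd : ∀ x ∈ Set.Ioi (0:ℝ), HasDerivAt (Fg p ε)
        (p * (((p - 1) * x ^ 2 + ε ^ 2) * (x ^ 2 + ε ^ 2) ^ ((p - 4) / 2))) x := by
      intro x hx
      exact hasDerivAt_Fg p ε hp x (by simp at hx; positivity)
    have hdiff : DifferentiableOn ℝ (Fg p ε) (Set.Ioi 0) :=
      fun x hx => ((hd x hx).differentiableAt).differentiableWithinAt
    refine monotoneOn_of_deriv_nonneg (convex_Ioi 0) hdiff.continuousOn
      (by rwa [interior_Ioi]) ?_
    intro x hx
    rw [interior_Ioi] at hx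
    rw [(hd x hx).deriv]
    have : (0:ℝ) < x := hx
    have h1 : 0 ≤ (p - 1) * x ^ 2 + ε ^ 2 := by nlinarith [sq_nonneg ε]
    have h2 : 0 ≤ (x ^ 2 + ε ^ 2) ^ ((p - 4) / 2) := Real.rpow_nonneg (by positivity) _
    positivity
  have hnn : ∀ x : ℝ, 0 ≤ x → 0 ≤ Fg p ε x := by
    intro x hx
    have : 0 ≤ (x ^ 2 + ε ^ 2) ^ ((p - 2) / 2) := Real.rpow_nonneg (by positivity) _
    unfold Fg
    have hp0 : (0:ℝ) ≤ p := by linarith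
    positivity
  have hIci : ∀ a b : ℝ, 0 ≤ a → a ≤ b → Fg p ε a ≤ Fg p ε b := by
    intro a b ha hab
    rcases eq_or_lt_of_le ha with rfl | ha'
    · have : Fg p ε 0 = 0 := by simp [Fg]
      rw [this]; exact hnn b hab
    · exact hIoi ha' (lt_of_lt_of_le ha' hab) hab
  have hodd : ∀ x : ℝ, Fg p ε (-x) = - Fg p ε x := by
    intro x; unfold Fg; rw [neg_pow]; ring_nf
  intro a b hab
  rcases le_total 0 a with ha | ha
  · exact hIci a b ha hab
  · rcases le_total b 0 with hb | hb
    · have := hIci (-b) (-a) (by linarith) (by linarith)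
      rw [hodd, hodd] at this
      linarith
    · have h1 : Fg p ε a ≤ 0 := by
        unfold Fg
        have : 0 ≤ (a ^ 2 + ε ^ 2) ^ ((p - 2) / 2) := Real.rpow_nonneg (by positivity) _
        have hp0 : (0:ℝ) ≤ p := by linarith
        nlinarith [mul_nonneg (mul_nonneg hp0 this) (neg_nonneg.2 ha)]
      exact le_trans h1 (hnn b hb)

lemma Fe_nonneg (p : ℝ) (hp : 1 < p) (ε a b : ℝ) : 0 ≤ Fe p ε a b := by
  rcases lt_trichotomy a b with hab | rfl | hab
  · obtain ⟨c, hc, hceq⟩ := exists_hasDerivAt_eq_slope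
      (fun y => (y ^ 2 + ε ^ 2) ^ (p / 2)) (Fg p ε) hab
      (fun x _ => (hasDerivAt_Fh p ε hp x).continuousAt.continuousWithinAt)
      (fun x _ => hasDerivAt_Fh p ε hp x)
    have hca : Fg p ε a ≤ Fg p ε c := Fg_mono p ε hp (le_of_lt hc.1)
    have hsl : (b ^ 2 + ε ^ 2) ^ (p / 2) - (a ^ 2 + ε ^ 2) ^ (p / 2)
        = Fg p ε c * (b - a) := by
      have hba : b - a ≠ 0 := sub_ne_zero.2 (ne_of_gt hab)
      rw [hceq, div_mul_cancel₀ _ hba]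
    rw [Fe_def, hsl]
    nlinarith [mul_le_mul_of_nonneg_right hca (by linarith : (0:ℝ) ≤ b - a)]
  · simp [Fe_def]
  · obtain ⟨c, hc, hceq⟩ := exists_hasDerivAt_eq_slope
      (fun y => (y ^ 2 + ε ^ 2) ^ (p / 2)) (Fg p ε) hab
      (fun x _ => (hasDerivAt_Fh p ε hp x).continuousAt.continuousWithinAt)
      (fun x _ => hasDerivAt_Fh p ε hp x)
    have hca : Fg p ε c ≤ Fg p ε a := Fg_mono p ε hp (le_of_lt hc.2)
    have hsl : (a ^ 2 + ε ^ 2) ^ (p / 2) - (b ^ 2 + ε ^ 2) ^ (p / 2)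
        = Fg p ε c * (a - b) := by
      have hba : a - b ≠ 0 := sub_ne_zero.2 (ne_of_gt hab)
      rw [hceq, div_mul_cancel₀ _ hba]
    rw [Fe_def]
    nlinarith [mul_le_mul_of_nonneg_right hca (by linarith : (0:ℝ) ≤ a - b)]

lemma Fe_max_aux (p : ℝ) (hp : 1 < p) (ε a₁ a₂ b₁ b₂ : ℝ) (h21 : a₂ ≤ a₁) :
    Fe p ε a₁ (max b₁ b₂) ≤ max (Fe p ε a₁ b₁) (Fe p ε a₂ b₂) := by
  rcases le_total b₂ b₁ with hb | hb
  · rw [max_eq_left hb]; exact le_max_left _ _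
  · rw [max_eq_right hb]
    have hM : Fg p ε a₂ ≤ Fg p ε a₁ := Fg_mono p ε hp h21
    rcases le_total a₁ b₂ with hab | hab
    · refine le_trans ?_ (le_max_right _ _)
      have hT := Fe_nonneg p hp ε a₂ a₁
      rw [Fe_def] at hT ⊢
      rw [Fe_def]
      nlinarith [mul_le_mul_of_nonneg_right hM (by linarith : (0:ℝ) ≤ b₂ - a₁)]
    · refine le_trans ?_ (le_max_left _ _)
      have hT := Fe_nonneg p hp ε b₂ b₁
      have hM2 : Fg p ε b₂ ≤ Fg p ε a₁ := Fg_mono p ε hp hab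
      rw [Fe_def] at hT ⊢
      rw [Fe_def]
      nlinarith [mul_le_mul_of_nonneg_right hM2 (by linarith : (0:ℝ) ≤ b₂ - b₁)]

theorem Fe_max (p : ℝ) (hp : 1 < p) (ε a₁ a₂ b₁ b₂ : ℝ) :
    Fe p ε (max a₁ a₂) (max b₁ b₂) ≤ max (Fe p ε a₁ b₁) (Fe p ε a₂ b₂) := by
  rcases le_total a₂ a₁ with h | h
  · rw [max_eq_left h]
    exact Fe_max_aux p hp ε a₁ a₂ b₁ b₂ h
  · rw [max_eq_right h, max_comm b₁ b₂, max_comm (Fe p ε a₁ b₁)]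
    exact Fe_max_aux p hp ε a₂ a₁ b₂ b₁ h
end

section
/- Let D ⊂ ℝ^d be open, u, h : D → ℝ with h > 0 on D, and suppose u and h are C² on D and harmonic (Δu = 0, Δh = 0) on D, with u ≠ 0 at a point x or p ≥ 2. Then at such points, Δ(|u|^p / h^{p-1}) = p(p-1)·|u/h|^{p-2}·|∇(u/h)|²·h. -/
lemma myHasDerivAt_abs_rpow_mul {p : ℝ} (hp : 1 < p) {a : ℝ} (ha : a ≠ 0 ∨ 2 ≤ p) :
    HasDerivAt (fun t : ℝ => |t| ^ (p - 2) * t) ((p - 1) * |a| ^ (p - 2)) a := by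
  rcases lt_trichotomy a 0 with hlt | heq | hgt
  · have hne : -a ≠ 0 := by simp [hlt.ne]
    have h1 : HasDerivAt (fun t : ℝ => (-t) ^ (p - 2)) ((p-2) * (-a) ^ (p - 3) * (-1)) a := by
      have := (Real.hasDerivAt_rpow_const (x := -a) (p := p-2) (Or.inl hne)).comp a
        (hasDerivAt_neg a)
      simp only [Function.comp_def] at this
      rw [show p - 2 - 1 = p - 3 by ring] at this
      exact this
    have h2 : HasDerivAt (fun t : ℝ => (-t) ^ (p - 2) * t)
        ((p-2) * (-a) ^ (p - 3) * (-1) * a + (-a) ^ (p-2) * 1) a := h1.mul (hasDerivAt_id a)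
    have h3 : (fun t : ℝ => (-t) ^ (p-2) * t) =ᶠ[nhds a] fun t => |t| ^ (p-2) * t := by
      filter_upwards [eventually_lt_nhds hlt] with t ht
      rw [abs_of_neg ht]
    refine (h2.congr_of_eventuallyEq h3.symm).congr_deriv ?_
    rw [abs_of_neg hlt, show p - 2 = (p - 3) + 1 by ring, Real.rpow_add_one hne]
    ring
  · subst heq
    have h2le : 2 ≤ p := by tauto
    rcases eq_or_lt_of_le h2le with h2 | h2
    · have : (fun t : ℝ => |t| ^ (p - 2) * t) = fun t : ℝ => t := by
        funext t; rw [← h2]; simp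
      rw [this]
      have : p - 1 = 1 := by linarith
      rw [this, ← h2]
      simpa using hasDerivAt_id' (0:ℝ)
    · rw [hasDerivAt_iff_tendsto_slope]
      have hz : |(0:ℝ)| ^ (p-2) = 0 := by
        rw [abs_zero, Real.zero_rpow (by linarith)]
      have heq : ∀ t : ℝ, t ≠ 0 → slope (fun t : ℝ => |t| ^ (p - 2) * t) 0 t = |t| ^ (p-2) := by
        intro t ht
        rw [slope_def_field]
        field_simp
        simp
      have hlim : Filter.Tendsto (fun t : ℝ => |t| ^ (p-2)) (nhdsWithin 0 {(0:ℝ)}ᶜ) (nhds ((p-1) * |(0:ℝ)| ^ (p-2))) := by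
        rw [hz, mul_zero]
        have : Filter.Tendsto (fun t : ℝ => |t| ^ (p-2)) (nhds 0) (nhds 0) := by
          have hc : ContinuousAt (fun t : ℝ => |t| ^ (p-2)) 0 :=
            ((Real.continuousAt_rpow_const _ _ (Or.inr (by linarith))).comp
              continuous_abs.continuousAt)
          have h0 : (0:ℝ) ^ (p-2) = 0 := Real.zero_rpow (by linarith)
          simpa [h0] using hc.tendsto
        exact this.mono_left nhdsWithin_le_nhds
      exact hlim.congr' (by filter_upwards [self_mem_nhdsWithin] with t ht
                            exact (heq t ht).symm)
  · have h1 : HasDerivAt (fun t : ℝ => t ^ (p - 1)) ((p-1) * a ^ (p - 2)) a := by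
      have := Real.hasDerivAt_rpow_const (x := a) (p := p-1) (Or.inl hgt.ne')
      convert this using 2; ring
    have h3 : (fun t : ℝ => t ^ (p-1)) =ᶠ[nhds a] fun t => |t| ^ (p-2) * t := by
      filter_upwards [eventually_gt_nhds hgt] with t ht
      rw [abs_of_pos ht, show p - 1 = (p - 2) + 1 by ring, Real.rpow_add_one ht.ne']
    refine (h1.congr_of_eventuallyEq h3.symm).congr_deriv ?_
    rw [abs_of_pos hgt]

noncomputable def lap {d : ℕ} (f : EuclideanSpace ℝ (Fin d) → ℝ) (x : EuclideanSpace ℝ (Fin d)) : ℝ :=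
  ∑ i, fderiv ℝ (fun y => fderiv ℝ f y (EuclideanSpace.single i 1)) x (EuclideanSpace.single i 1)

set_option maxHeartbeats 1000000 in
theorem laplacian_abs_pow_div (d : ℕ) (p : ℝ) (hp : 1 < p)
    (D : Set (EuclideanSpace ℝ (Fin d))) (hD : IsOpen D)
    (u h : EuclideanSpace ℝ (Fin d) → ℝ)
    (hu : ContDiffOn ℝ 2 u D) (hh : ContDiffOn ℝ 2 h D)
    (hpos : ∀ x ∈ D, 0 < h x)
    (huharm : ∀ x ∈ D, lap u x = 0) (hhharm : ∀ x ∈ D, lap h x = 0)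
    (x : EuclideanSpace ℝ (Fin d)) (hx : x ∈ D) (hcase : 2 ≤ p ∨ u x ≠ 0) :
    lap (fun y => |u y| ^ p / h y ^ (p - 1)) x =
      p * (p - 1) * |u x / h x| ^ (p - 2) * ‖gradient (fun y => u y / h y) x‖ ^ 2 * h x := by
  have hb₀ : 0 < h x := hpos x hx
  have hcase' : u x ≠ 0 ∨ 2 ≤ p := hcase.symm
  set e : Fin d → EuclideanSpace ℝ (Fin d) := fun i => EuclideanSpace.single i 1 with he
  -- basic differentiability
  have hud : ∀ y ∈ D, DifferentiableAt ℝ u y := fun y hy =>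
    (hu.contDiffAt (hD.mem_nhds hy)).differentiableAt two_ne_zero
  have hhd : ∀ y ∈ D, DifferentiableAt ℝ h y := fun y hy =>
    (hh.contDiffAt (hD.mem_nhds hy)).differentiableAt two_ne_zero
  set G : EuclideanSpace ℝ (Fin d) → ℝ := fun y => |u y| ^ p * h y ^ (1 - p) with hG
  set c₁ : EuclideanSpace ℝ (Fin d) → ℝ :=
    fun y => h y ^ (1 - p) * (p * |u y| ^ (p - 2) * u y) with hc₁def
  set c₂ : EuclideanSpace ℝ (Fin d) → ℝ :=
    fun y => |u y| ^ p * ((1 - p) * h y ^ (-p)) with hc₂def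
  set Fd : EuclideanSpace ℝ (Fin d) → (EuclideanSpace ℝ (Fin d) →L[ℝ] ℝ) :=
    fun y => c₂ y • fderiv ℝ h y + c₁ y • fderiv ℝ u y with hFddef
  -- first derivative of G on D
  have hGd : ∀ y ∈ D, HasFDerivAt G (Fd y) y := by
    intro y hy
    have du := (hud y hy).hasFDerivAt
    have dh := (hhd y hy).hasFDerivAt
    have hhy : 0 < h y := hpos y hy
    have A1 : HasFDerivAt (fun t => |u t| ^ p)
        ((p * |u y| ^ (p - 2) * u y) • fderiv ℝ u y) y :=
      (hasDerivAt_abs_rpow (u y) hp).comp_hasFDerivAt y du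
    have A2 : HasDerivAt (fun b : ℝ => b ^ (1 - p)) ((1 - p) * h y ^ (-p)) (h y) := by
      have := Real.hasDerivAt_rpow_const (x := h y) (p := 1 - p) (Or.inl hhy.ne')
      convert this using 2
      ring
    have A2' : HasFDerivAt (fun t => h t ^ (1 - p))
        (((1 - p) * h y ^ (-p)) • fderiv ℝ h y) y := A2.comp_hasFDerivAt y dh
    have := A1.mul A2'
    rw [smul_smul, smul_smul] at this
    exact this
  have hFdx : fderiv ℝ G =ᶠ[nhds x] Fd := by
    filter_upwards [hD.eventually_mem hx] with y hy
    exact (hGd y hy).fderiv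
  -- second derivative pieces
  have hu2 : DifferentiableAt ℝ (fderiv ℝ u) x :=
    ((hu.contDiffAt (hD.mem_nhds hx)).fderiv_right (m := 1) (by norm_num)).differentiableAt one_ne_zero
  have hh2 : DifferentiableAt ℝ (fderiv ℝ h) x :=
    ((hh.contDiffAt (hD.mem_nhds hx)).fderiv_right (m := 1) (by norm_num)).differentiableAt one_ne_zero
  set U2 := fderiv ℝ (fderiv ℝ u) x with hU2
  set H2 := fderiv ℝ (fderiv ℝ h) x with hH2
  have hDu2 : ∀ i, HasFDerivAt (fun y => fderiv ℝ u y (e i))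
      ((ContinuousLinearMap.apply ℝ ℝ (e i)).comp U2) x := fun i =>
    ((ContinuousLinearMap.apply ℝ ℝ (e i)).hasFDerivAt).comp x hu2.hasFDerivAt
  have hDh2 : ∀ i, HasFDerivAt (fun y => fderiv ℝ h y (e i))
      ((ContinuousLinearMap.apply ℝ ℝ (e i)).comp H2) x := fun i =>
    ((ContinuousLinearMap.apply ℝ ℝ (e i)).hasFDerivAt).comp x hh2.hasFDerivAt
  have hlapu : ∑ i, U2 (e i) (e i) = 0 := by
    rw [← huharm x hx]
    unfold lap
    exact (Finset.sum_congr rfl fun i _ => by rw [(hDu2 i).fderiv]; rfl).symm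
  have hlaph : ∑ i, H2 (e i) (e i) = 0 := by
    rw [← hhharm x hx]
    unfold lap
    exact (Finset.sum_congr rfl fun i _ => by rw [(hDh2 i).fderiv]; rfl).symm
  -- derivatives of the coefficients at x
  have dux := (hud x hx).hasFDerivAt
  have dhx := (hhd x hx).hasFDerivAt
  set Du := fderiv ℝ u x with hDu
  set Dh := fderiv ℝ h x with hDh
  have q1 : HasFDerivAt (fun y => h y ^ (1 - p)) (((1 - p) * h x ^ (-p)) • Dh) x := by
    have A2 : HasDerivAt (fun b : ℝ => b ^ (1 - p)) ((1 - p) * h x ^ (-p)) (h x) := by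
      have := Real.hasDerivAt_rpow_const (x := h x) (p := 1 - p) (Or.inl hb₀.ne')
      convert this using 2
      ring
    exact A2.comp_hasFDerivAt x dhx
  have q2 : HasFDerivAt (fun y => p * |u y| ^ (p - 2) * u y)
      ((p * ((p - 1) * |u x| ^ (p - 2))) • Du) x := by
    have := ((myHasDerivAt_abs_rpow_mul hp hcase').comp_hasFDerivAt x dux).const_mul p
    rw [smul_smul] at this
    simpa [mul_assoc] using this
  have hc1 := q1.mul q2
  have r1 : HasFDerivAt (fun y => |u y| ^ p) ((p * |u x| ^ (p - 2) * u x) • Du) x :=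
    (hasDerivAt_abs_rpow (u x) hp).comp_hasFDerivAt x dux
  have r2 : HasFDerivAt (fun y => (1 - p) * h y ^ (-p))
      (((1 - p) * (-p * h x ^ (-p - 1))) • Dh) x := by
    have A2 : HasDerivAt (fun b : ℝ => b ^ (-p)) (-p * h x ^ (-p - 1)) (h x) := by
      have := Real.hasDerivAt_rpow_const (x := h x) (p := -p) (Or.inl hb₀.ne')
      convert this using 2
    have := (A2.comp_hasFDerivAt x dhx).const_mul (1 - p)
    rw [smul_smul] at this
    exact this
  have hc2 := r1.mul r2
  -- per-coordinate second derivative of G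
  have hbig : ∀ i, fderiv ℝ (fun y => fderiv ℝ G y (e i)) x (e i) =
      (c₂ x * (H2 (e i) (e i)) + Dh (e i) *
        (|u x| ^ p * ((1 - p) * (-p * h x ^ (-p - 1)) * Dh (e i)) +
          (1 - p) * h x ^ (-p) * (p * |u x| ^ (p - 2) * u x * Du (e i)))) +
      (c₁ x * (U2 (e i) (e i)) + Du (e i) *
        (h x ^ (1 - p) * (p * ((p - 1) * |u x| ^ (p - 2)) * Du (e i)) +
          (p * |u x| ^ (p - 2) * u x) * ((1 - p) * h x ^ (-p) * Dh (e i)))) := by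
    intro i
    have heq : (fun y => fderiv ℝ G y (e i)) =ᶠ[nhds x]
        (fun y => c₂ y * fderiv ℝ h y (e i) + c₁ y * fderiv ℝ u y (e i)) := by
      filter_upwards [hFdx] with y hy
      rw [hy]
      simp [hFddef]
    rw [heq.fderiv_eq]
    have htot : HasFDerivAt (fun y => c₂ y * fderiv ℝ h y (e i) + c₁ y * fderiv ℝ u y (e i)) _ x :=
      (hc2.mul (hDh2 i)).add (hc1.mul (hDu2 i))
    rw [htot.fderiv]
    simp only [ContinuousLinearMap.add_apply, ContinuousLinearMap.coe_smul', Pi.smul_apply,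
      ContinuousLinearMap.coe_comp', Function.comp_apply, ContinuousLinearMap.apply_apply,
      smul_eq_mul, Pi.mul_apply]
    try ring
  -- sums
  set SAA := ∑ i, Du (e i) * Du (e i) with hSAA
  set SAB := ∑ i, Du (e i) * Dh (e i) with hSAB
  set SBB := ∑ i, Dh (e i) * Dh (e i) with hSBB
  have hlapG : lap G x =
      c₂ x * (∑ i, H2 (e i) (e i)) + c₁ x * (∑ i, U2 (e i) (e i)) +
        ((|u x| ^ p * ((1 - p) * (-p * h x ^ (-p - 1)))) * SBB +
         (2 * ((1 - p) * h x ^ (-p) * (p * |u x| ^ (p - 2) * u x))) * SAB +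
         (h x ^ (1 - p) * (p * ((p - 1) * |u x| ^ (p - 2)))) * SAA) := by
    unfold lap
    rw [Finset.sum_congr rfl fun i _ => hbig i]
    rw [hSAA, hSAB, hSBB]
    simp only [Finset.mul_sum, ← Finset.sum_add_distrib]
    exact Finset.sum_congr rfl fun i _ => by ring
  -- gradient
  set v : EuclideanSpace ℝ (Fin d) → ℝ := fun y => u y / h y with hv
  set Dv : EuclideanSpace ℝ (Fin d) →L[ℝ] ℝ :=
    u x • ((-(h x ^ 2)⁻¹) • Dh) + (h x)⁻¹ • Du with hDvdef
  have hvd : HasFDerivAt v Dv x := by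
    have hinv : HasFDerivAt (fun y => (h y)⁻¹) ((-(h x ^ 2)⁻¹) • Dh) x :=
      (hasDerivAt_inv hb₀.ne').comp_hasFDerivAt x dhx
    have := dux.mul hinv
    have hfun : v = fun y => u y * (h y)⁻¹ := by
      funext y; simp [hv, div_eq_mul_inv]
    rw [hfun]
    exact this
  have hgradnorm : ‖gradient v x‖ ^ 2 = ∑ i, Dv (e i) * Dv (e i) := by
    have hg : gradient v x = (InnerProductSpace.toDual ℝ _).symm Dv :=
      (hasFDerivAt_iff_hasGradientAt.mp hvd).gradient
    rw [hg, ← real_inner_self_eq_norm_sq]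
    rw [← OrthonormalBasis.sum_inner_mul_inner (EuclideanSpace.basisFun (Fin d) ℝ)]
    refine Finset.sum_congr rfl fun i _ => ?_
    rw [real_inner_comm ((InnerProductSpace.toDual ℝ _).symm Dv)
      (EuclideanSpace.basisFun (Fin d) ℝ i), InnerProductSpace.toDual_symm_apply,
      EuclideanSpace.basisFun_apply]
  -- replace the original function by G
  have hFlap : lap (fun y => |u y| ^ p / h y ^ (p - 1)) x = lap G x := by
    have hFG : (fun y => |u y| ^ p / h y ^ (p - 1)) =ᶠ[nhds x] G := by
      filter_upwards [hD.eventually_mem hx] with y hy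
      have hhy : 0 < h y := hpos y hy
      show |u y| ^ p / h y ^ (p - 1) = |u y| ^ p * h y ^ (1 - p)
      rw [show (1 : ℝ) - p = -(p - 1) by ring, Real.rpow_neg hhy.le, div_eq_mul_inv]
    unfold lap
    refine Finset.sum_congr rfl fun i _ => ?_
    have h1 : (fun y => fderiv ℝ (fun y => |u y| ^ p / h y ^ (p - 1)) y (e i)) =ᶠ[nhds x]
        (fun y => fderiv ℝ G y (e i)) := by
      filter_upwards [hFG.fderiv (𝕜 := ℝ)] with y hy
      rw [hy]
    rw [h1.fderiv_eq]
  rw [hFlap, hlapG, hlapu, hlaph, hgradnorm]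
  -- now pure scalar algebra
  set α := |u x| ^ (p - 2) with hα
  set β := h x ^ (p - 2) with hβ
  have hβpos : 0 < β := Real.rpow_pos_of_pos hb₀ _
  have hb1 : h x ^ (1 - p) = (β * h x)⁻¹ := by
    rw [show (1 : ℝ) - p = -((p - 2) + 1) by ring, Real.rpow_neg hb₀.le,
      Real.rpow_add hb₀, Real.rpow_one]
  have hb2 : h x ^ (-p) = (β * h x ^ 2)⁻¹ := by
    rw [show -p = -((p - 2) + 2) by ring, Real.rpow_neg hb₀.le,
      Real.rpow_add hb₀, Real.rpow_two]
  have hb3 : h x ^ (-p - 1) = (β * h x ^ 3)⁻¹ := by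
    rw [show -p - 1 = -((p - 2) + 3) by ring, Real.rpow_neg hb₀.le,
      Real.rpow_add hb₀, show (3 : ℝ) = ((3 : ℕ) : ℝ) by norm_num, Real.rpow_natCast]
  have hap : |u x| ^ p = α * u x ^ 2 := by
    rcases eq_or_ne (u x) 0 with h0 | h0
    · rw [h0]
      simp [Real.zero_rpow (show p ≠ 0 by linarith)]
    · rw [show p = (p - 2) + 2 by ring, Real.rpow_add (abs_pos.2 h0), Real.rpow_two, sq_abs, hα]
  have hq : |u x / h x| ^ (p - 2) = α / β := by
    rw [abs_div, abs_of_pos hb₀, Real.div_rpow (abs_nonneg _) hb₀.le, hα, hβ]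
  have hDvi : ∀ i, Dv (e i) = u x * (-(h x ^ 2)⁻¹ * Dh (e i)) + (h x)⁻¹ * Du (e i) := by
    intro i
    simp only [hDvdef, ContinuousLinearMap.add_apply, ContinuousLinearMap.coe_smul',
      Pi.smul_apply, smul_eq_mul]
  have hsum2 : ∑ i, Dv (e i) * Dv (e i) =
      (u x ^ 2 * (h x ^ 2)⁻¹ ^ 2) * SBB + (-2 * u x * (h x ^ 2)⁻¹ * (h x)⁻¹) * SAB +
        ((h x)⁻¹ ^ 2) * SAA := by
    rw [hSAA, hSAB, hSBB]
    simp only [Finset.mul_sum, ← Finset.sum_add_distrib]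
    refine Finset.sum_congr rfl fun i _ => ?_
    rw [hDvi i]
    ring
  rw [hsum2, hb1, hb2, hb3, hap, hq]
  field_simp
  ring
end
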